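/- arXiv:1303.0127 — 3 statements merged into one kernel-verified Lean document; each statement's English description precedes it below -/
import Mathlib

section
/- Let H = ℓ²(ℕ) and let E_can be the canonical phase observable, defined on Borel sets Θ ⊆ [0,2π) by ⟨m| E_can(Θ) |n⟩ = (1/2π) ∫_Θ e^{iθ(m-n)} dθ. If a bounded operator A on H commutes with E_can(Θ) for every Borel set Θ ⊆ [0,2π), then A is a scalar multiple of the identity. -/
open MeasureTheory Complex Real
open scoped InnerProductSpace

noncomputable section

/-- The Hilbert space `ℓ²(ℕ)`. -/
abbrev H : Type := lp (fun _ : ℕ => ℂ) 2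

/-- The standard orthonormal basis vector `|n⟩` of `ℓ²(ℕ)`. -/
def ket (n : ℕ) : H := lp.single 2 n 1

open scoped ENNReal

/-! ### Auxiliary lemmas -/

lemma ket_inner (k : ℕ) (y : H) : ⟪ket k, y⟫_ℂ = y k := by
  rw [ket, lp.inner_single_left]; simp

lemma inner_ket (k : ℕ) (y : H) : ⟪y, ket k⟫_ℂ = starRingEnd ℂ (y k) := by
  rw [ket, lp.inner_single_right]; simp

lemma expandT (T : H →L[ℂ] H) (f : H) (m : ℕ) :
    HasSum (fun k => f k * ⟪ket m, T (ket k)⟫_ℂ) ⟪ket m, T f⟫_ℂ := by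
  have h0 : HasSum (fun k : ℕ => lp.single 2 k (f k)) f :=
    lp.hasSum_single (by norm_num) f
  have h1 := ((innerSL ℂ (ket m)).comp T).hasSum h0
  refine h1.congr_fun fun k => ?_
  have : lp.single 2 k (f k) = (f k : ℂ) • ket k := by
    rw [ket, ← lp.single_smul]; norm_num
  simp [this, inner_smul_right]

lemma ext_of_matrix (T S : H →L[ℂ] H)
    (h : ∀ m n, ⟪ket m, T (ket n)⟫_ℂ = ⟪ket m, S (ket n)⟫_ℂ) : T = S := by
  refine ContinuousLinearMap.ext fun f => ?_
  refine lp.ext (funext fun k => ?_)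
  have h1 := (expandT T f k).tsum_eq
  have h2 := (expandT S f k).tsum_eq
  rw [← ket_inner k (T f), ← ket_inner k (S f), ← h1, ← h2]
  exact tsum_congr fun j => by rw [h k j]

def auxp (j : ℤ) (x : ℝ) : ℂ :=
  if j = 0 then (x:ℂ) else (Complex.exp (Complex.I*x*j) - 1)/(Complex.I*j)

lemma Ine (j : ℤ) (hj : j ≠ 0) : Complex.I * (j:ℂ) ≠ 0 := by
  simp [Complex.I_ne_zero, hj]

lemma integral_Ico_exp (j : ℤ) {x : ℝ} (hx : 0 ≤ x) :
    ∫ θ in Set.Ico (0:ℝ) x, Complex.exp (Complex.I*θ*j) = auxp j x := by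
  rw [integral_Ico_eq_integral_Ioo, ← integral_Ioc_eq_integral_Ioo,
    ← intervalIntegral.integral_of_le hx]
  by_cases hj : j = 0
  · simp [hj, auxp]
  · simp_rw [show ∀ θ:ℝ, Complex.I*(θ:ℂ)*(j:ℂ) = (Complex.I*j)*θ by intro θ; ring]
    rw [integral_exp_mul_complex (Ine j hj)]
    simp only [auxp, hj, if_false, Complex.ofReal_zero, mul_zero, Complex.exp_zero]
    rw [mul_right_comm]

lemma integral_exp_int (u : ℤ) (hu : u ≠ 0) :
    ∫ x in (0:ℝ)..(2*π), Complex.exp (Complex.I*u*x) = 0 := by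
  have he : (fun x:ℝ => Complex.exp (Complex.I*u*x)) = fun x:ℝ => Complex.exp ((Complex.I*u)*x) := by
    funext x; ring_nf
  rw [he, integral_exp_mul_complex (Ine u hu)]
  have h1 : Complex.I*(u:ℂ)*((2*π:ℝ):ℂ) = (u:ℂ) * (2*(π:ℂ)*Complex.I) := by
    push_cast; ring
  rw [h1, Complex.exp_int_mul_two_pi_mul_I]
  simp

lemma integral_x_exp (c : ℂ) (hc : c ≠ 0) :
    ∫ x in (0:ℝ)..(2*π), (x:ℂ) * Complex.exp (c*x)
      = (2*π/c) * Complex.exp (c*(2*π)) - (1/c^2) * Complex.exp (c*(2*π)) + 1/c^2 := by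
  have key : ∀ z : ℂ, HasDerivAt (fun z : ℂ => z/c * Complex.exp (c*z)
      - 1/c^2 * Complex.exp (c*z)) (z * Complex.exp (c*z)) z := by
    intro z
    have h1 : HasDerivAt (fun z : ℂ => z / c) (1/c) z := by
      simpa using (hasDerivAt_id z).div_const c
    have h2 : HasDerivAt (fun z : ℂ => Complex.exp (c*z)) (Complex.exp (c*z)*c) z := by
      simpa using ((hasDerivAt_id z).const_mul c).cexp
    have := (h1.mul h2).sub (h2.const_mul (1/c^2))
    refine this.congr_deriv ?_
    field_simp
    ring
  have key2 : ∀ x : ℝ, HasDerivAt (fun y : ℝ => ((y:ℂ)/c * Complex.exp (c*y)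
      - 1/c^2 * Complex.exp (c*y))) ((x:ℂ) * Complex.exp (c*x)) x :=
    fun x => (key x).comp_ofReal
  rw [intervalIntegral.integral_eq_sub_of_hasDerivAt (fun x _ => key2 x)
    ((Complex.continuous_ofReal.mul (Complex.continuous_exp.comp
      (continuous_const.mul Complex.continuous_ofReal))).intervalIntegrable _ _)]
  push_cast
  simp only [mul_zero, Complex.exp_zero]
  ring

def Qv (s j : ℤ) : ℂ :=
  if j = s then 2*π/(Complex.I*s) else if j = 0 then -(2*π/(Complex.I*s)) else 0

lemma cont_exp_mul (c : ℂ) : Continuous fun x:ℝ => Complex.exp (c*x) :=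
  Complex.continuous_exp.comp (continuous_const.mul Complex.continuous_ofReal)

lemma integral_auxp (s : ℤ) (hs : s ≠ 0) (j : ℤ) :
    ∫ x in (0:ℝ)..(2*π), auxp j x * Complex.exp (-(Complex.I*s*x)) = Qv s j := by
  have hIs : Complex.I * (s:ℂ) ≠ 0 := Ine _ hs
  by_cases hj : j = 0
  · subst hj
    have he : (fun x:ℝ => auxp 0 x * Complex.exp (-(Complex.I*s*x)))
        = fun x:ℝ => (x:ℂ) * Complex.exp ((Complex.I*((-s:ℤ):ℂ))*x) := by
      funext x; simp only [auxp, if_true, eq_self_iff_true]; push_cast; ring_nf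
    rw [he, integral_x_exp _ (Ine _ (neg_ne_zero.2 hs))]
    have h1 : (Complex.I*((-s:ℤ):ℂ))*(2*(π:ℂ)) = ((-s:ℤ):ℂ) * (2*(π:ℂ)*Complex.I) := by ring
    rw [h1, Complex.exp_int_mul_two_pi_mul_I]
    have h2 : Qv s 0 = -(2*(π:ℂ)/(Complex.I*s)) := by
      simp [Qv, hs, Ne.symm hs]
    rw [h2]
    have : ((-s:ℤ):ℂ) = -(s:ℂ) := by push_cast; ring
    rw [this]
    field_simp
    ring
  · by_cases hjs : j = s
    · subst hjs
      have he : (fun x:ℝ => auxp j x * Complex.exp (-(Complex.I*j*x)))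
          = fun x:ℝ => (1/(Complex.I*j)) * ((1:ℂ) - Complex.exp (Complex.I*((-j:ℤ):ℂ)*x)) := by
        funext x
        simp only [auxp, if_neg hj]
        rw [div_mul_eq_mul_div, sub_mul, ← Complex.exp_add]
        have h0 : Complex.I*(x:ℂ)*(j:ℂ) + -(Complex.I*(j:ℂ)*(x:ℂ)) = 0 := by ring
        rw [h0, Complex.exp_zero]
        have h1 : -(Complex.I*(j:ℂ)*(x:ℂ)) = Complex.I*((-j:ℤ):ℂ)*(x:ℂ) := by push_cast; ring
        rw [h1]
        ring
      rw [he, intervalIntegral.integral_const_mul, intervalIntegral.integral_sub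
        intervalIntegrable_const ((cont_exp_mul (Complex.I*((-j:ℤ):ℂ))).intervalIntegrable _ _)]
      rw [integral_exp_int _ (neg_ne_zero.2 hj)]
      simp only [intervalIntegral.integral_const, sub_zero, smul_eq_mul, mul_one, sub_zero]
      simp only [Qv, if_pos rfl]
      push_cast
      field_simp
      simp [Complex.real_smul]
    · have he : (fun x:ℝ => auxp j x * Complex.exp (-(Complex.I*s*x)))
          = fun x:ℝ => (1/(Complex.I*j)) * (Complex.exp (Complex.I*((j-s:ℤ):ℂ)*x)
              - Complex.exp (Complex.I*((-s:ℤ):ℂ)*x)) := by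
        funext x
        simp only [auxp, if_neg hj]
        rw [div_mul_eq_mul_div, sub_mul, ← Complex.exp_add]
        have h0 : Complex.I*(x:ℂ)*(j:ℂ) + -(Complex.I*(s:ℂ)*(x:ℂ))
            = Complex.I*((j-s:ℤ):ℂ)*(x:ℂ) := by push_cast; ring
        have h1 : -(Complex.I*(s:ℂ)*(x:ℂ)) = Complex.I*((-s:ℤ):ℂ)*(x:ℂ) := by push_cast; ring
        rw [h0, h1]
        ring
      rw [he, intervalIntegral.integral_const_mul, intervalIntegral.integral_sub
        ((cont_exp_mul (Complex.I*((j-s:ℤ):ℂ))).intervalIntegrable _ _)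
        ((cont_exp_mul (Complex.I*((-s:ℤ):ℂ))).intervalIntegrable _ _)]
      rw [integral_exp_int _ (sub_ne_zero.2 hjs), integral_exp_int _ (neg_ne_zero.2 hs)]
      simp [Qv, hj, hjs]

def bnd (n k : ℕ) : ℝ := if k = n then 2*π else 2/|(k:ℝ) - n|

lemma bnd_nonneg (n k : ℕ) : 0 ≤ bnd n k := by
  unfold bnd; split
  · positivity
  · positivity

lemma cont_auxp (j : ℤ) : Continuous (auxp j) := by
  unfold auxp; split
  · exact Complex.continuous_ofReal
  · apply Continuous.div_const
    apply Continuous.sub _ continuous_const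
    exact Complex.continuous_exp.comp (by continuity)

lemma norm_auxp_le (j : ℤ) (n k : ℕ) (hj0 : j = 0 ↔ k = n)
    (hjabs : |(j:ℝ)| = |(k:ℝ) - n|) {x : ℝ}
    (h0 : 0 ≤ x) (h2 : x ≤ 2*π) : ‖auxp j x‖ ≤ bnd n k := by
  by_cases hk : k = n
  · have hj : j = 0 := hj0.mpr hk
    subst hj
    simp only [auxp, bnd, hk, if_true, eq_self_iff_true, Complex.norm_real]
    rw [Real.norm_eq_abs, _root_.abs_of_nonneg h0]
    exact h2
  · have hj : j ≠ 0 := fun h => hk (hj0.mp h)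
    rw [auxp, if_neg hj, bnd, if_neg hk]
    rw [norm_div]
    have hd : ‖Complex.I * (j:ℂ)‖ = |(k:ℝ) - n| := by
      rw [norm_mul, Complex.norm_I, one_mul, Complex.norm_intCast, hjabs]
    rw [hd]
    have hpos : 0 < |(k:ℝ) - n| := by
      rw [abs_pos, sub_ne_zero]
      exact_mod_cast hk
    gcongr
    have hone : ‖Complex.exp (Complex.I*(x:ℂ)*(j:ℂ))‖ = 1 := by
      have : Complex.I*(x:ℂ)*(j:ℂ) = ((x * (j:ℝ) : ℝ):ℂ) * Complex.I := by
        push_cast; ring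
      rw [this, Complex.norm_exp_ofReal_mul_I]
    refine (norm_sub_le _ _).trans ?_
    rw [hone, norm_one]
    norm_num

lemma summable_bnd_sq (n : ℕ) : Summable fun k => (bnd n k)^2 := by
  apply (summable_nat_add_iff (n+1)).1
  have he : ∀ i : ℕ, bnd n (i + (n+1)) ^ 2 = 4 * (1 / (((i+1:ℕ)):ℝ)^2) := by
    intro i
    have h1 : i + (n+1) ≠ n := by omega
    rw [bnd, if_neg h1]
    have h2 : |((i + (n+1) : ℕ):ℝ) - n| = ((i+1:ℕ):ℝ) := by
      push_cast
      rw [show ((i:ℝ) + ((n:ℝ)+1)) - (n:ℝ) = (i:ℝ)+1 from by ring,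
        _root_.abs_of_nonneg (by positivity)]
    rw [h2]
    field_simp
    ring
  refine Summable.congr ?_ (fun i => (he i).symm)
  exact ((summable_nat_add_iff 1).2 (Real.summable_one_div_nat_pow.2 (by norm_num))).mul_left 4

lemma summable_norm_sq (g : H) : Summable fun k => ‖g k‖^2 := by
  have h := lp.memℓp g
  rw [memℓp_gen_iff (by norm_num)] at h
  refine h.congr fun k => ?_
  rw [show ((2:ℝ≥0∞).toReal) = ((2:ℕ):ℝ) by norm_num, Real.rpow_natCast]

lemma summable_row (g : H) (n : ℕ) : Summable fun k => ‖g k‖ * bnd n k := by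
  have h := ((summable_norm_sq g).add (summable_bnd_sq n)).div_const 2
  refine Summable.of_nonneg_of_le
    (fun k => mul_nonneg (norm_nonneg _) (bnd_nonneg n k)) (fun k => ?_) h
  simp only [Pi.div_apply, Pi.add_apply]
  nlinarith [norm_nonneg (g k), bnd_nonneg n k, sq_nonneg (‖g k‖ - bnd n k)]

lemma tsum_Qv_left (c : ℕ → ℂ) (n : ℕ) (s : ℤ) (hs : s ≠ 0) :
    ∑' k, c k * Qv s ((k:ℤ) - n)
      = (if 0 ≤ (n:ℤ) + s then c ((n:ℤ)+s).toNat else 0) * (2*π/(Complex.I*s))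
        - c n * (2*π/(Complex.I*s)) := by
  classical
  set k0 := ((n:ℤ)+s).toNat with hk0def
  have hsupp : ∀ k ∉ ({n, k0} : Finset ℕ), c k * Qv s ((k:ℤ) - n) = 0 := by
    intro k hk
    simp only [Finset.mem_insert, Finset.mem_singleton, not_or] at hk
    have h1 : (k:ℤ) - n ≠ 0 := by omega
    have h2 : (k:ℤ) - n ≠ s := by omega
    rw [Qv, if_neg h2, if_neg h1, mul_zero]
  rw [tsum_eq_sum hsupp]
  have hq1 : Qv s ((n:ℤ) - n) = -(2*π/(Complex.I*s)) := by
    simp only [sub_self, Qv, if_neg (Ne.symm hs), eq_self_iff_true, if_true]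
  by_cases hpos : 0 ≤ (n:ℤ) + s
  · have hk0 : (k0:ℤ) = (n:ℤ) + s := Int.toNat_of_nonneg hpos
    have hne : n ≠ k0 := by omega
    rw [Finset.sum_pair hne]
    have hq2 : Qv s ((k0:ℤ) - n) = 2*π/(Complex.I*s) := by
      rw [Qv, if_pos (by omega)]
    rw [hq1, hq2, if_pos hpos]
    ring
  · rw [if_neg hpos]
    have hk00 : k0 = 0 := by omega
    by_cases hn : n = 0
    · have : ({n, k0} : Finset ℕ) = {n} := by
        rw [hk00, hn]; rfl
      rw [this, Finset.sum_singleton, hq1]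
      ring
    · have hne : n ≠ k0 := by omega
      rw [Finset.sum_pair hne, hq1]
      have hq2 : Qv s ((k0:ℤ) - n) = 0 := by
        rw [Qv, if_neg (by omega), if_neg (by omega)]
      rw [hq2, mul_zero]
      ring

lemma tsum_Qv_right (c : ℕ → ℂ) (m : ℕ) (s : ℤ) (hs : s ≠ 0) :
    ∑' k, c k * Qv s ((m:ℤ) - k)
      = (if 0 ≤ (m:ℤ) - s then c ((m:ℤ)-s).toNat else 0) * (2*π/(Complex.I*s))
        - c m * (2*π/(Complex.I*s)) := by
  classical
  set l0 := ((m:ℤ)-s).toNat with hl0def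
  have hsupp : ∀ k ∉ ({m, l0} : Finset ℕ), c k * Qv s ((m:ℤ) - k) = 0 := by
    intro k hk
    simp only [Finset.mem_insert, Finset.mem_singleton, not_or] at hk
    have h1 : (m:ℤ) - k ≠ 0 := by omega
    have h2 : (m:ℤ) - k ≠ s := by omega
    rw [Qv, if_neg h2, if_neg h1, mul_zero]
  rw [tsum_eq_sum hsupp]
  have hq1 : Qv s ((m:ℤ) - m) = -(2*π/(Complex.I*s)) := by
    simp only [sub_self, Qv, if_neg (Ne.symm hs), eq_self_iff_true, if_true]
  by_cases hpos : 0 ≤ (m:ℤ) - s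
  · have hl0 : (l0:ℤ) = (m:ℤ) - s := Int.toNat_of_nonneg hpos
    have hne : m ≠ l0 := by omega
    rw [Finset.sum_pair hne]
    have hq2 : Qv s ((m:ℤ) - l0) = 2*π/(Complex.I*s) := by
      rw [Qv, if_pos (by omega)]
    rw [hq1, hq2, if_pos hpos]
    ring
  · rw [if_neg hpos]
    have hl00 : l0 = 0 := by omega
    by_cases hm : m = 0
    · have : ({m, l0} : Finset ℕ) = {m} := by
        rw [hl00, hm]; rfl
      rw [this, Finset.sum_singleton, hq1]
      ring
    · have hne : m ≠ l0 := by omega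
      rw [Finset.sum_pair hne, hq1]
      have hq2 : Qv s ((m:ℤ) - l0) = 0 := by
        rw [Qv, if_neg (by omega), if_neg (by omega)]
      rw [hq2, mul_zero]
      ring
lemma intnorm_bound (G : ℕ → ℝ → ℂ) (hIG : ∀ k, IntegrableOn (G k) (Set.Ioc 0 (2*π)))
    (c : ℕ → ℝ)
    (hG : ∀ k, ∀ x ∈ Set.Ioc (0:ℝ) (2*π), ‖G k x‖ ≤ c k) :
    ∀ k, ∫ x in Set.Ioc (0:ℝ) (2*π), ‖G k x‖ ≤ (2*π) * c k := by
  intro k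
  have h1 : ∫ x in Set.Ioc (0:ℝ) (2*π), ‖G k x‖
      ≤ ∫ _x in Set.Ioc (0:ℝ) (2*π), c k := by
    refine integral_mono_ae (hIG k).norm ?_ ?_
    · exact integrableOn_const (by rw [Real.volume_Ioc]; exact ENNReal.ofReal_ne_top)
    · exact (ae_restrict_iff' measurableSet_Ioc).2 (ae_of_all _ (hG k))
  refine h1.trans (le_of_eq ?_)
  rw [setIntegral_const, Real.volume_real_Ioc_of_le (by positivity), smul_eq_mul]
  ring

set_option maxHeartbeats 2000000 in
lemma extraction (Ecan : Set ℝ → H →L[ℂ] H)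
    (hEcan : ∀ Θ : Set ℝ, MeasurableSet Θ → Θ ⊆ Set.Ico 0 (2*π) →
      ∀ m n : ℕ, ⟪ket m, Ecan Θ (ket n)⟫_ℂ
        = (2*π)⁻¹ * ∫ θ in Θ, Complex.exp (Complex.I * θ * ((m : ℂ) - (n : ℂ))))
    (A : H →L[ℂ] H)
    (hA : ∀ Θ : Set ℝ, MeasurableSet Θ → Θ ⊆ Set.Ico 0 (2*π) →
      A ∘L Ecan Θ = Ecan Θ ∘L A) (m n : ℕ) (s : ℤ) (hs : s ≠ 0) :
    (if 0 ≤ (n:ℤ) + s then ⟪ket m, A (ket ((n:ℤ) + s).toNat)⟫_ℂ else 0)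
      = (if 0 ≤ (m:ℤ) - s then ⟪ket ((m:ℤ) - s).toNat, A (ket n)⟫_ℂ else 0) := by
  classical
  have hπ : (π:ℂ) ≠ 0 := by exact_mod_cast Real.pi_ne_zero
  set F1 : ℕ → ℝ → ℂ := fun k x =>
    ⟪ket m, A (ket k)⟫_ℂ * (auxp ((k:ℤ) - (n:ℤ)) x * Complex.exp (-(Complex.I*s*x))) with hF1
  set F2 : ℕ → ℝ → ℂ := fun k x =>
    ⟪ket k, A (ket n)⟫_ℂ * (auxp ((m:ℤ) - (k:ℤ)) x * Complex.exp (-(Complex.I*s*x))) with hF2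
  have hexp1 : ∀ x : ℝ, ‖Complex.exp (-(Complex.I*(s:ℂ)*(x:ℝ)))‖ = 1 := by
    intro x
    have : -(Complex.I*(s:ℂ)*(x:ℂ)) = ((-(s:ℝ)*x : ℝ):ℂ) * Complex.I := by push_cast; ring
    rw [this, Complex.norm_exp_ofReal_mul_I]
  have key : Set.EqOn (fun x => ∑' k, F1 k x) (fun x => ∑' k, F2 k x)
      (Set.Ioc (0:ℝ) (2*π)) := by
    intro x hx
    simp only
    have hxm : MeasurableSet (Set.Ico (0:ℝ) x) := measurableSet_Ico
    have hxs : Set.Ico (0:ℝ) x ⊆ Set.Ico 0 (2*π) := Set.Ico_subset_Ico_right hx.2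
    have hcoord : ∀ p q : ℕ, ⟪ket p, Ecan (Set.Ico 0 x) (ket q)⟫_ℂ
        = (2*π)⁻¹ * auxp ((p:ℤ) - (q:ℤ)) x := by
      intro p q
      rw [hEcan _ hxm hxs p q]
      have hfun : (fun θ:ℝ => Complex.exp (Complex.I * θ * ((p : ℂ) - (q : ℂ))))
          = fun θ:ℝ => Complex.exp (Complex.I * θ * ((((p:ℤ) - (q:ℤ)):ℤ):ℂ)) := by
        funext θ; push_cast; ring_nf
      rw [hfun, integral_Ico_exp _ hx.1.le]
    have h1 := expandT A (Ecan (Set.Ico 0 x) (ket n)) m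
    have h2 := expandT (Ecan (Set.Ico 0 x)) (A (ket n)) m
    have hcomm : ⟪ket m, A (Ecan (Set.Ico 0 x) (ket n))⟫_ℂ
        = ⟪ket m, Ecan (Set.Ico 0 x) (A (ket n))⟫_ℂ := by
      have h := hA _ hxm hxs
      calc ⟪ket m, A (Ecan (Set.Ico 0 x) (ket n))⟫_ℂ
          = ⟪ket m, (A ∘L Ecan (Set.Ico 0 x)) (ket n)⟫_ℂ := rfl
        _ = ⟪ket m, (Ecan (Set.Ico 0 x) ∘L A) (ket n)⟫_ℂ := by rw [h]
        _ = _ := rfl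
    set C : ℂ := (2*π) * Complex.exp (-(Complex.I*s*x)) with hC
    have e1 : ∀ k, F1 k x
        = (Ecan (Set.Ico 0 x) (ket n)) k * ⟪ket m, A (ket k)⟫_ℂ * C := by
      intro k
      rw [← ket_inner k (Ecan (Set.Ico 0 x) (ket n)), hcoord k n, hC, hF1]
      simp only
      push_cast
      field_simp
    have e2 : ∀ k, F2 k x
        = (A (ket n)) k * ⟪ket m, Ecan (Set.Ico 0 x) (ket k)⟫_ℂ * C := by
      intro k
      rw [← ket_inner k (A (ket n)), hcoord m k, hC, hF2]
      simp only
      push_cast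
      field_simp
    have hs1 : HasSum (fun k => F1 k x)
        (⟪ket m, A (Ecan (Set.Ico 0 x) (ket n))⟫_ℂ * C) :=
      (h1.mul_right C).congr_fun e1
    have hs2 : HasSum (fun k => F2 k x)
        (⟪ket m, Ecan (Set.Ico 0 x) (A (ket n))⟫_ℂ * C) :=
      (h2.mul_right C).congr_fun e2
    rw [hs1.tsum_eq, hs2.tsum_eq, hcomm]
  have hcont1 : ∀ k, Continuous (F1 k) := fun k =>
    continuous_const.mul ((cont_auxp _).mul (Complex.continuous_exp.comp (Continuous.neg (continuous_const.mul Complex.continuous_ofReal))))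
  have hcont2 : ∀ k, Continuous (F2 k) := fun k =>
    continuous_const.mul ((cont_auxp _).mul (Complex.continuous_exp.comp (Continuous.neg (continuous_const.mul Complex.continuous_ofReal))))
  have hInt1 : ∀ k, IntegrableOn (F1 k) (Set.Ioc 0 (2*π)) := fun k =>
    (hcont1 k).integrableOn_Ioc
  have hInt2 : ∀ k, IntegrableOn (F2 k) (Set.Ioc 0 (2*π)) := fun k =>
    (hcont2 k).integrableOn_Ioc
  have hnorm1 : ∀ k, ∀ x ∈ Set.Ioc (0:ℝ) (2*π),
      ‖F1 k x‖ ≤ ‖⟪ket m, A (ket k)⟫_ℂ‖ * bnd n k := by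
    intro k x hx
    rw [hF1]
    simp only
    rw [norm_mul, norm_mul, hexp1 x, mul_one]
    refine mul_le_mul_of_nonneg_left ?_ (norm_nonneg _)
    refine norm_auxp_le _ n k (by omega) ?_ hx.1.le hx.2
    push_cast
    rfl
  have hnorm2 : ∀ k, ∀ x ∈ Set.Ioc (0:ℝ) (2*π),
      ‖F2 k x‖ ≤ ‖⟪ket k, A (ket n)⟫_ℂ‖ * bnd m k := by
    intro k x hx
    rw [hF2]
    simp only
    rw [norm_mul, norm_mul, hexp1 x, mul_one]
    refine mul_le_mul_of_nonneg_left ?_ (norm_nonneg _)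
    refine norm_auxp_le _ m k (by omega) ?_ hx.1.le hx.2
    push_cast
    rw [abs_sub_comm]
  have hSum1 : Summable fun k => ∫ x in Set.Ioc (0:ℝ) (2*π), ‖F1 k x‖ := by
    have hadj : ∀ k, ‖⟪ket m, A (ket k)⟫_ℂ‖
        = ‖(ContinuousLinearMap.adjoint A (ket m)) k‖ := by
      intro k
      rw [← ContinuousLinearMap.adjoint_inner_left, inner_ket]
      simp
    have hrow : Summable fun k => ‖⟪ket m, A (ket k)⟫_ℂ‖ * bnd n k :=
      (summable_row (ContinuousLinearMap.adjoint A (ket m)) n).congr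
        fun k => by rw [← hadj k]
    refine Summable.of_nonneg_of_le (fun k => integral_nonneg fun x => norm_nonneg _)
      (intnorm_bound F1 hInt1 _ hnorm1)
      (hrow.mul_left (2*π))
  have hSum2 : Summable fun k => ∫ x in Set.Ioc (0:ℝ) (2*π), ‖F2 k x‖ := by
    have hcol : ∀ k, ‖⟪ket k, A (ket n)⟫_ℂ‖ = ‖(A (ket n)) k‖ := by
      intro k; rw [ket_inner]
    have hrow : Summable fun k => ‖⟪ket k, A (ket n)⟫_ℂ‖ * bnd m k :=
      (summable_row (A (ket n)) m).congr fun k => by rw [← hcol k]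
    refine Summable.of_nonneg_of_le (fun k => integral_nonneg fun x => norm_nonneg _)
      (intnorm_bound F2 hInt2 _ hnorm2)
      (hrow.mul_left (2*π))
  have swap1 := hasSum_integral_of_summable_integral_norm
    (μ := volume.restrict (Set.Ioc (0:ℝ) (2*π))) hInt1 hSum1
  have swap2 := hasSum_integral_of_summable_integral_norm
    (μ := volume.restrict (Set.Ioc (0:ℝ) (2*π))) hInt2 hSum2
  have hmid : ∫ x in Set.Ioc (0:ℝ) (2*π), (∑' k, F1 k x)
      = ∫ x in Set.Ioc (0:ℝ) (2*π), (∑' k, F2 k x) :=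
    setIntegral_congr_fun measurableSet_Ioc key
  have hts : (∑' k, ∫ x in Set.Ioc (0:ℝ) (2*π), F1 k x)
      = ∑' k, ∫ x in Set.Ioc (0:ℝ) (2*π), F2 k x := by
    rw [swap1.tsum_eq, swap2.tsum_eq]
    exact hmid
  have hev1 : ∀ k, ∫ x in Set.Ioc (0:ℝ) (2*π), F1 k x
      = ⟪ket m, A (ket k)⟫_ℂ * Qv s ((k:ℤ) - (n:ℤ)) := by
    intro k
    rw [hF1]
    simp only
    rw [MeasureTheory.integral_const_mul, ← intervalIntegral.integral_of_le Real.two_pi_pos.le,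
      integral_auxp s hs]
  have hev2 : ∀ k, ∫ x in Set.Ioc (0:ℝ) (2*π), F2 k x
      = ⟪ket k, A (ket n)⟫_ℂ * Qv s ((m:ℤ) - (k:ℤ)) := by
    intro k
    rw [hF2]
    simp only
    rw [MeasureTheory.integral_const_mul, ← intervalIntegral.integral_of_le Real.two_pi_pos.le,
      integral_auxp s hs]
  have hQ : (∑' k, ⟪ket m, A (ket k)⟫_ℂ * Qv s ((k:ℤ) - (n:ℤ)))
      = ∑' k, ⟪ket k, A (ket n)⟫_ℂ * Qv s ((m:ℤ) - (k:ℤ)) := by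
    rw [← tsum_congr hev1, ← tsum_congr hev2]
    exact hts
  rw [tsum_Qv_left _ n s hs, tsum_Qv_right _ m s hs] at hQ
  have hQne : (2*(π:ℂ)/(Complex.I*(s:ℂ))) ≠ 0 := by
    apply div_ne_zero
    · simp [hπ]
    · exact Ine s hs
  exact mul_right_cancel₀ hQne (sub_left_inj.mp hQ)

/-- If a bounded operator `A` on `ℓ²(ℕ)` commutes with every effect `E_can(Θ)` of the
canonical phase observable, given by the matrix elements
`⟨m|E_can(Θ)|n⟩ = (2π)⁻¹ ∫_Θ e^{iθ(m-n)} dθ`, then `A` is a scalar multiple of the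
identity. -/
theorem stmt1 (Ecan : Set ℝ → H →L[ℂ] H)
    (hEcan : ∀ Θ : Set ℝ, MeasurableSet Θ → Θ ⊆ Set.Ico 0 (2*π) →
      ∀ m n : ℕ, ⟪ket m, Ecan Θ (ket n)⟫_ℂ
        = (2*π)⁻¹ * ∫ θ in Θ, Complex.exp (Complex.I * θ * ((m : ℂ) - (n : ℂ))))
    (A : H →L[ℂ] H)
    (hA : ∀ Θ : Set ℝ, MeasurableSet Θ → Θ ⊆ Set.Ico 0 (2*π) →
      A ∘L Ecan Θ = Ecan Θ ∘L A) :
    ∃ c : ℂ, A = c • (1 : H →L[ℂ] H) := by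
  classical
  have key := extraction Ecan hEcan A hA
  have hdiag : ∀ d : ℕ, ⟪ket (d+1), A (ket (d+1))⟫_ℂ = ⟪ket d, A (ket d)⟫_ℂ := by
    intro d
    have h := key (d+1) d 1 one_ne_zero
    rw [if_pos (by omega), if_pos (by omega),
      show ((d:ℤ) + 1).toNat = d + 1 from by omega,
      show (((d+1:ℕ):ℤ) - 1).toNat = d from by omega] at h
    exact h
  have hconst : ∀ d : ℕ, ⟪ket d, A (ket d)⟫_ℂ = ⟪ket 0, A (ket 0)⟫_ℂ := by
    intro d
    induction d with
    | zero => rfl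
    | succ p ih => rw [hdiag p]; exact ih
  have hoff : ∀ m n : ℕ, m ≠ n → ⟪ket m, A (ket n)⟫_ℂ = 0 := by
    intro m n hmn
    rcases lt_or_gt_of_ne hmn with h | h
    · have hsne : (n:ℤ) ≠ 0 := by omega
      have hk := key m 0 n hsne
      rw [if_pos (by omega), if_neg (by omega),
        show (((0:ℕ):ℤ) + (n:ℤ)).toNat = n from by omega] at hk
      exact hk
    · have hk := key (m - n - 1) n (-(n:ℤ)-1) (by omega)
      rw [if_neg (by omega), if_pos (by omega),
        show (((m - n - 1:ℕ):ℤ) - (-(n:ℤ)-1)).toNat = m from by omega] at hk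
      exact hk.symm
  refine ⟨⟪ket 0, A (ket 0)⟫_ℂ, ext_of_matrix _ _ fun m n => ?_⟩
  rw [ContinuousLinearMap.smul_apply, ContinuousLinearMap.one_apply, inner_smul_right]
  by_cases hmn : m = n
  · subst hmn
    have h1 : ⟪ket m, ket m⟫_ℂ = 1 := by
      rw [ket_inner, ket]
      simp [lp.single_apply]
    rw [h1, mul_one, hconst m]
  · have h0 : ⟪ket m, ket n⟫_ℂ = 0 := by
      rw [ket_inner, ket]
      simp [lp.single_apply, hmn]
    rw [h0, mul_zero, hoff m n hmn]
end
end

section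
/- If a projection-valued measure F on a measurable space Ω (taking values in projections on ℓ²(ℕ)) is jointly measurable with the canonical phase observable E_can (i.e., there exists a POVM M on the product σ-algebra whose margins are F and E_can), then F is trivial: for each measurable X, F(X) = c_X · I with c_X ∈ {0,1}. -/
open MeasureTheory Complex Real
open scoped InnerProductSpace ComplexConjugate

noncomputable section

lemma inner_ket_left (k : ℕ) (v : H) : ⟪ket k, v⟫_ℂ = v k := by
  simp [ket, lp.inner_single_left]

lemma single_eq_smul_ket (k : ℕ) (c : ℂ) : lp.single 2 k c = c • ket k := by
  rw [ket, ← lp.single_smul]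
  norm_num

lemma quad_ext {T S : H →L[ℂ] H} (h : ∀ ψ : H, ⟪ψ, T ψ⟫_ℂ = ⟪ψ, S ψ⟫_ℂ) : T = S := by
  have h0 : ∀ x : H, ⟪((T - S : H →L[ℂ] H) : H →ₗ[ℂ] H) x, x⟫_ℂ = 0 := by
    intro x
    have h1 : ⟪x, T x⟫_ℂ = ⟪x, S x⟫_ℂ := h x
    have h2 : ⟪T x, x⟫_ℂ = ⟪S x, x⟫_ℂ := by
      rw [← inner_conj_symm, h1, inner_conj_symm]
    simp [inner_sub_left, h2]
  have := (inner_map_self_eq_zero _).mp h0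
  have h3 : (T - S : H →L[ℂ] H) = 0 := by
    apply ContinuousLinearMap.coe_injective
    simpa using this
  exact sub_eq_zero.mp h3

lemma sa_inner_swap {T : H →L[ℂ] H} (hT : IsSelfAdjoint T) (x y : H) :
    ⟪T x, y⟫_ℂ = ⟪x, T y⟫_ℂ := by
  conv_lhs => rw [← hT.adjoint_eq]
  exact ContinuousLinearMap.adjoint_inner_left T y x

lemma isPositive_inner_zero {T : H →L[ℂ] H} (hT : T.IsPositive) {ψ : H}
    (h : ⟪ψ, T ψ⟫_ℂ = 0) : T ψ = 0 := by
  have key : ∀ x : H, (⟪x, T ψ⟫_ℂ).re = 0 := by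
    intro x
    set z : ℂ := ⟪ψ, T x⟫_ℂ with hz
    set w : ℂ := ⟪x, T x⟫_ℂ with hw
    have hswap : ⟪x, T ψ⟫_ℂ = conj z := by
      rw [hz, ← sa_inner_swap hT.isSelfAdjoint x ψ, ← inner_conj_symm]
    set r : ℝ := z.re with hrdef
    set g : ℝ := w.re with hgdef
    have hg0 : 0 ≤ g := (Complex.nonneg_iff.mp (hT.inner_nonneg_right x)).1
    have hq : ∀ t : ℝ, 0 ≤ 2 * t * r + t ^ 2 * g := by
      intro t
      have h0 : 0 ≤ (⟪ψ + (t:ℂ) • x, T (ψ + (t:ℂ) • x)⟫_ℂ).re :=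
        (Complex.nonneg_iff.mp (hT.inner_nonneg_right _)).1
      have hexp : ⟪ψ + (t:ℂ) • x, T (ψ + (t:ℂ) • x)⟫_ℂ
          = (t:ℂ) * z + (t:ℂ) * conj z + (t:ℂ)^2 * w := by
        rw [map_add, ContinuousLinearMap.map_smul]
        rw [inner_add_left, inner_add_right, inner_add_right, inner_smul_left,
          inner_smul_right, inner_smul_left, inner_smul_right, h, ← hswap]
        rw [hswap, Complex.conj_ofReal]
        ring
      rw [hexp] at h0
      have hre : ((t:ℂ) * z + (t:ℂ) * conj z + (t:ℂ)^2 * w).re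
          = 2 * t * r + t ^ 2 * g := by
        simp [Complex.add_re, Complex.mul_re, Complex.ofReal_re, Complex.ofReal_im,
          Complex.conj_re, Complex.conj_im, pow_two]
        ring
      rwa [hre] at h0
    have hg1 : (0:ℝ) < g + 1 := by linarith
    have h1 := hq (-(r / (g + 1)))
    have h2 : 0 ≤ (2 * (-(r/(g+1))) * r + (-(r/(g+1)))^2 * g) * (g+1)^2 :=
      mul_nonneg h1 (sq_nonneg _)
    have h3 : (2 * (-(r/(g+1))) * r + (-(r/(g+1)))^2 * g) * (g+1)^2
        = r^2 * g - 2*r^2*(g+1) := by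
      field_simp
      ring
    have h4 : r ^ 2 ≤ 0 := by nlinarith
    have h5 : r ^ 2 = 0 := le_antisymm h4 (sq_nonneg r)
    have h6 : r = 0 := by
      have := sq_eq_zero_iff.mp h5
      exact this
    rw [hswap]
    simpa using h6
  have hall : ∀ x : H, ⟪x, T ψ⟫_ℂ = 0 := by
    intro x
    have h1 : (⟪x, T ψ⟫_ℂ).re = 0 := key x
    have h2 : (⟪x, T ψ⟫_ℂ).im = 0 := by
      have := key ((Complex.I) • x)
      rw [inner_smul_left] at this
      simpa [Complex.mul_re] using this
    exact Complex.ext h1 h2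
  have := hall (T ψ)
  rwa [inner_self_eq_zero] at this

/-- closed form of `⟪ket k, E_can([0,t)) ket n⟫` with `d = k - n`. -/
def phi (d : ℤ) (t : ℝ) : ℂ :=
  if d = 0 then (2*(π:ℂ))⁻¹ * t
  else (Complex.exp (Complex.I*t*d) - 1)/(2*(π:ℂ)*Complex.I*d)

lemma phi_continuous (d : ℤ) : Continuous (phi d) := by
  unfold phi
  by_cases hd : d = 0 <;> simp [hd] <;> fun_prop

lemma contIntegrableOn {f : ℝ → ℂ} (hf : Continuous f) (a b : ℝ) :
    IntegrableOn f (Set.Ico a b) := by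
  exact (hf.integrableOn_Icc).mono_set Set.Ico_subset_Icc_self

lemma norm_exp_I_mul (t : ℝ) (z : ℂ) (hz : z.im = 0) :
    ‖Complex.exp (Complex.I * t * z)‖ = 1 := by
  rw [Complex.norm_exp]
  simp [Complex.mul_re, Complex.mul_im, hz]

lemma ico_to_ioc (f : ℝ → ℂ) (a b : ℝ) :
    ∫ t in Set.Ico a b, f t = ∫ t in Set.Ioc a b, f t := by
  rw [← MeasureTheory.integral_Icc_eq_integral_Ico,
    MeasureTheory.integral_Icc_eq_integral_Ioc]

lemma intE (e : ℤ) :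
    (∫ t in Set.Ico (0:ℝ) (2*π), Complex.exp (Complex.I*t*e))
      = if e = 0 then (2*(π:ℂ)) else 0 := by
  have h2π : (0:ℝ) ≤ 2*π := by positivity
  rw [ico_to_ioc, ← intervalIntegral.integral_of_le h2π]
  by_cases he : e = 0
  · simp [he]
  · have hc : (Complex.I * e) ≠ 0 := by
      simp [Complex.I_ne_zero, Int.cast_injective, he]
    have hcongr : ∀ t : ℝ, Complex.exp (Complex.I*t*e) = Complex.exp ((Complex.I*e)*t) := by
      intro t; ring_nf
    rw [if_neg he]
    simp_rw [hcongr]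
    rw [integral_exp_mul_complex hc]
    have h1 : Complex.exp (Complex.I * e * ((2*π : ℝ):ℂ)) = 1 := by
      have := Complex.exp_int_mul_two_pi_mul_I e
      rw [← this]
      congr 1
      push_cast
      ring
    rw [h1]
    simp

/-- bound for `phi`. -/
def Cb (d : ℤ) : ℝ := if d = 0 then 1 else |(d:ℝ)|⁻¹

lemma Cb_nonneg (d : ℤ) : 0 ≤ Cb d := by
  unfold Cb; by_cases hd : d = 0 <;> simp [hd] <;> positivity

lemma phi_bound (d : ℤ) (t : ℝ) (ht0 : 0 ≤ t) (ht : t ≤ 2*π) :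
    ‖phi d t‖ ≤ Cb d := by
  unfold phi Cb
  by_cases hd : d = 0
  · rw [if_pos hd, if_pos hd]
    rw [norm_mul]
    have h1 : ‖((t:ℝ):ℂ)‖ = t := by
      rw [Complex.norm_real, Real.norm_of_nonneg ht0]
    have h2 : ‖(2*(π:ℂ))⁻¹‖ = (2*π)⁻¹ := by
      rw [norm_inv]
      have : (2*(π:ℂ)) = ((2*π : ℝ):ℂ) := by push_cast; ring
      rw [this, Complex.norm_real, Real.norm_of_nonneg (by positivity)]
    rw [h1, h2]
    rw [inv_mul_le_iff₀ (by positivity)]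
    simpa using ht
  · rw [if_neg hd, if_neg hd]
    rw [norm_div]
    have hnum : ‖Complex.exp (Complex.I*t*d) - 1‖ ≤ 2 := by
      calc ‖Complex.exp (Complex.I*t*d) - 1‖
          ≤ ‖Complex.exp (Complex.I*t*d)‖ + ‖(1:ℂ)‖ := norm_sub_le _ _
        _ ≤ 2 := by rw [norm_exp_I_mul t d (by simp)]; norm_num
    have hden : ‖(2*(π:ℂ)*Complex.I*(d:ℂ))‖ = 2*π*|(d:ℝ)| := by
      have hre : (2*(π:ℂ)*Complex.I*(d:ℂ)) = ((2*π:ℝ):ℂ) * Complex.I * ((d:ℝ):ℂ) := by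
        push_cast; ring
      rw [hre, norm_mul, norm_mul, Complex.norm_real, Complex.norm_I,
        Complex.norm_real, Real.norm_of_nonneg (by positivity), Real.norm_eq_abs]
      ring
    rw [hden]
    have hd' : (0:ℝ) < |(d:ℝ)| := by
      rw [abs_pos]
      exact_mod_cast hd
    rw [div_le_iff₀ (by positivity)]
    have hπ : (1:ℝ) ≤ π := by linarith [Real.pi_gt_three]
    calc ‖Complex.exp (Complex.I*t*d) - 1‖ ≤ 2 := hnum
      _ ≤ |(d:ℝ)|⁻¹ * (2*π*|(d:ℝ)|) := by
          rw [show |(d:ℝ)|⁻¹ * (2*π*|(d:ℝ)|) = 2*π * (|(d:ℝ)|⁻¹ * |(d:ℝ)|) by ring,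
            inv_mul_cancel₀ hd'.ne', mul_one]
          nlinarith

lemma psi_int (j : ℕ) (hj : 1 ≤ j) (d : ℤ) (hd : d ≠ 0) :
    (∫ t in Set.Ico (0:ℝ) (2*π), Complex.exp (-(Complex.I*t*j)) * phi d t)
      = if d = (j:ℤ) then (Complex.I*(j:ℂ))⁻¹ else 0 := by
  have hrw : ∀ t : ℝ, Complex.exp (-(Complex.I*t*j)) * phi d t
      = (2*(π:ℂ)*Complex.I*(d:ℂ))⁻¹ *
        (Complex.exp (Complex.I*t*((d - j : ℤ):ℂ)) - Complex.exp (Complex.I*t*((-(j:ℤ) : ℤ):ℂ))) := by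
    intro t
    unfold phi
    rw [if_neg hd]
    rw [div_eq_inv_mul]
    have e1 : Complex.exp (-(Complex.I*t*j)) * Complex.exp (Complex.I*t*d)
        = Complex.exp (Complex.I*t*((d - j : ℤ):ℂ)) := by
      rw [← Complex.exp_add]
      congr 1
      push_cast
      ring
    have e2 : Complex.exp (-(Complex.I*t*j)) = Complex.exp (Complex.I*t*((-(j:ℤ) : ℤ):ℂ)) := by
      congr 1
      push_cast
      ring
    rw [← e1, ← e2]
    ring
  simp_rw [hrw]
  rw [MeasureTheory.integral_const_mul]
  rw [MeasureTheory.integral_sub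
    (contIntegrableOn (by fun_prop) _ _) (contIntegrableOn (by fun_prop) _ _)]
  rw [intE, intE]
  have hjne : (-(j:ℤ)) ≠ 0 := by omega
  rw [if_neg hjne]
  by_cases hdj : d = (j:ℤ)
  · rw [if_pos (by omega : d - (j:ℤ) = 0), if_pos hdj, hdj]
    have hπ : ((π:ℂ)) ≠ 0 := by
      simpa using Real.pi_ne_zero
    have hjc : ((j:ℂ)) ≠ 0 := by
      have : j ≠ 0 := by omega
      exact_mod_cast this
    push_cast
    field_simp
    ring
  · rw [if_neg (by omega : ¬ (d - (j:ℤ) = 0)), if_neg hdj]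
    simp

lemma Cb_sq_summable : Summable (fun d : ℤ => Cb d ^ 2) := by
  have h1 : Summable (fun d : ℤ => 1/(d:ℝ)^2) :=
    summable_one_div_int_pow.mpr one_lt_two
  have h2 : Summable (fun d : ℤ => if d = 0 then (1:ℝ) else 0) := by
    apply summable_of_ne_finset_zero (s := {0})
    intro b hb
    simp only [Finset.mem_singleton] at hb
    simp [hb]
  refine (h1.add h2).congr fun d => ?_
  unfold Cb
  by_cases hd : d = 0
  · simp [hd]
  · rw [if_neg hd, if_neg hd, add_zero, inv_pow, _root_.sq_abs]
    rw [one_div]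


lemma sq_summ (f : H) : Summable (fun k : ℕ => ‖f k‖ ^ 2) := by
  have h := (lp.hasSum_norm (p := 2) (by norm_num) f).summable
  refine h.congr fun k => ?_
  norm_num

lemma prod_summable {a : ℕ → ℂ} (ha : Summable fun k => ‖a k‖^2) (e : ℕ → ℤ)
    (he : Function.Injective e) : Summable (fun k => ‖a k‖ * Cb (e k)) := by
  have hc : Summable (fun k => Cb (e k) ^ 2) := Cb_sq_summable.comp_injective he
  refine Summable.of_nonneg_of_le
    (fun k => mul_nonneg (norm_nonneg _) (Cb_nonneg _)) (fun k => ?_)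
    ((ha.add hc).mul_left (1/2))
  have := sq_nonneg (‖a k‖ - Cb (e k))
  nlinarith

lemma Ecan_Ico_val (Ecan : Set ℝ → H →L[ℂ] H)
    (hEcan : ∀ Θ : Set ℝ, MeasurableSet Θ → Θ ⊆ Set.Ico 0 (2*π) →
      ∀ m n : ℕ, ⟪ket m, Ecan Θ (ket n)⟫_ℂ
        = (2*π)⁻¹ * ∫ θ in Θ, Complex.exp (Complex.I * θ * ((m : ℂ) - (n : ℂ))))
    (t : ℝ) (ht0 : 0 ≤ t) (htlt : t < 2*π) (k n : ℕ) :
    ⟪ket k, Ecan (Set.Ico 0 t) (ket n)⟫_ℂ = phi ((k:ℤ) - (n:ℤ)) t := by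
  have hsub : Set.Ico (0:ℝ) t ⊆ Set.Ico 0 (2*π) := Set.Ico_subset_Ico_right htlt.le
  have h := hEcan _ measurableSet_Ico hsub k n
  have hcast : ((k:ℂ) - (n:ℂ)) = (((k:ℤ) - (n:ℤ) : ℤ) : ℂ) := by push_cast; ring
  rw [hcast] at h
  set d : ℤ := (k:ℤ) - (n:ℤ) with hd
  by_cases hd0 : d = 0
  · rw [hd0] at h ⊢
    unfold phi
    rw [if_pos rfl, h]
    simp only [Int.cast_zero, mul_zero, Complex.exp_zero]
    rw [MeasureTheory.setIntegral_const, measureReal_def, Real.volume_Ico,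
      ENNReal.toReal_ofReal (by linarith : (0:ℝ) ≤ t - 0)]
    simp only [Complex.real_smul]
    push_cast
    ring
  · unfold phi
    rw [if_neg hd0, h]
    have hcongr : ∀ θ : ℝ, Complex.exp (Complex.I*θ*d) = Complex.exp ((Complex.I*d)*θ) := by
      intro θ; ring_nf
    rw [ico_to_ioc, ← intervalIntegral.integral_of_le ht0]
    simp_rw [hcongr]
    rw [integral_exp_mul_complex (by simp [Complex.I_ne_zero, hd0] :
      (Complex.I * (d:ℂ)) ≠ 0)]
    have hπ : ((π:ℂ)) ≠ 0 := by simpa using Real.pi_ne_zero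
    have hdc : ((d:ℂ)) ≠ 0 := by exact_mod_cast hd0
    rw [Complex.ofReal_zero, mul_zero, Complex.exp_zero]
    rw [show (((2*π)⁻¹ : ℝ):ℂ) = (2*(π:ℂ))⁻¹ from by push_cast; ring]
    rw [inv_mul_eq_div, div_div]
    ring_nf

theorem comm_scalar (P : H →L[ℂ] H) (hsa : IsSelfAdjoint P)
    (Ecan : Set ℝ → H →L[ℂ] H)
    (hφval : ∀ t : ℝ, 0 ≤ t → t < 2*π → ∀ k n : ℕ,
      ⟪ket k, Ecan (Set.Ico 0 t) (ket n)⟫_ℂ = phi ((k:ℤ) - (n:ℤ)) t)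
    (hComm : ∀ Θ : Set ℝ, MeasurableSet Θ → Θ ⊆ Set.Ico 0 (2*π) → ∀ m n : ℕ,
      ⟪P (ket m), Ecan Θ (ket n)⟫_ℂ = ⟪ket m, Ecan Θ (P (ket n))⟫_ℂ) :
    P = (⟪ket 0, P (ket 0)⟫_ℂ) • (1 : H →L[ℂ] H) := by
  -- Step 1: the two expansions as HasSum
  have hL : ∀ t : ℝ, 0 ≤ t → t < 2*π → ∀ m n : ℕ,
      HasSum (fun k : ℕ => ⟪ket m, P (ket k)⟫_ℂ * phi ((k:ℤ)-(n:ℤ)) t)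
        ⟪P (ket m), Ecan (Set.Ico 0 t) (ket n)⟫_ℂ := by
    intro t ht0 htlt m n
    have h := lp.hasSum_inner (𝕜 := ℂ) (P (ket m)) (Ecan (Set.Ico 0 t) (ket n))
    have heq : (fun k : ℕ => ⟪(P (ket m)) k, (Ecan (Set.Ico 0 t) (ket n)) k⟫_ℂ)
        = fun k : ℕ => ⟪ket m, P (ket k)⟫_ℂ * phi ((k:ℤ)-(n:ℤ)) t := by
      funext k
      rw [RCLike.inner_apply]
      have h1 : (P (ket m)) k = ⟪ket k, P (ket m)⟫_ℂ := (inner_ket_left k _).symm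
      have h2 : (Ecan (Set.Ico 0 t) (ket n)) k
          = phi ((k:ℤ)-(n:ℤ)) t := by
        rw [← inner_ket_left k]
        exact hφval t ht0 htlt k n
      rw [h1, h2, ← inner_conj_symm, sa_inner_swap hsa]
      simp
      ring
    rwa [heq] at h
  have hR : ∀ t : ℝ, 0 ≤ t → t < 2*π → ∀ m n : ℕ,
      HasSum (fun k : ℕ => ⟪ket k, P (ket n)⟫_ℂ * phi ((m:ℤ)-(k:ℤ)) t)
        ⟪ket m, Ecan (Set.Ico 0 t) (P (ket n))⟫_ℂ := by
    intro t ht0 htlt m n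
    have h1 : HasSum (fun k : ℕ => lp.single 2 k ((P (ket n)) k)) (P (ket n)) :=
      lp.hasSum_single (by norm_num) _
    have h2 := ((innerSL ℂ (ket m)).comp (Ecan (Set.Ico 0 t))).hasSum h1
    have heq : (fun k : ℕ =>
        ((innerSL ℂ (ket m)).comp (Ecan (Set.Ico 0 t))) (lp.single 2 k ((P (ket n)) k)))
        = fun k : ℕ => ⟪ket k, P (ket n)⟫_ℂ * phi ((m:ℤ)-(k:ℤ)) t := by
      funext k
      simp only [ContinuousLinearMap.comp_apply, innerSL_apply_apply]
      rw [single_eq_smul_ket, ContinuousLinearMap.map_smul, inner_smul_right,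
        hφval t ht0 htlt m k, ← inner_ket_left k (P (ket n))]
    rwa [heq] at h2
  -- Step 2: key matrix element relation
  have hkey : ∀ m n j : ℕ, 1 ≤ j →
      ⟪ket m, P (ket (n+j))⟫_ℂ
        = if j ≤ m then ⟪ket (m-j), P (ket n)⟫_ℂ else 0 := by
    intro m n j hj
    have h2π : (0:ℝ) < 2*π := by positivity
    set I2 : Set ℝ := Set.Ico (0:ℝ) (2*π) with hI2
    set Fk : ℕ → ℝ → ℂ := fun k t =>
      Complex.exp (-(Complex.I*t*j)) * (⟪ket m, P (ket k)⟫_ℂ * phi ((k:ℤ)-(n:ℤ)) t) with hFk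
    set Gk : ℕ → ℝ → ℂ := fun k t =>
      Complex.exp (-(Complex.I*t*j)) * (⟪ket k, P (ket n)⟫_ℂ * phi ((m:ℤ)-(k:ℤ)) t) with hGk
    set Ψ₀ : ℂ := ∫ t in I2, Complex.exp (-(Complex.I*t*j)) * phi 0 t with hΨ₀
    have heqt : ∀ t ∈ I2, (∑' k, Fk k t) = ∑' k, Gk k t := by
      intro t ht
      obtain ⟨ht0, htlt⟩ := ht
      have h1 := (hL t ht0 htlt m n).mul_left (Complex.exp (-(Complex.I*t*j)))
      have h2 := (hR t ht0 htlt m n).mul_left (Complex.exp (-(Complex.I*t*j)))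
      have hc := hComm (Set.Ico 0 t) measurableSet_Ico
        (Set.Ico_subset_Ico_right htlt.le) m n
      rw [hFk, hGk]
      rw [h1.tsum_eq, h2.tsum_eq, hc]
    have hcont : ∀ (c : ℂ) (d : ℤ), Continuous (fun t : ℝ =>
        Complex.exp (-(Complex.I*t*j)) * (c * phi d t)) := by
      intro c d
      apply Continuous.mul
      · fun_prop
      · exact continuous_const.mul (phi_continuous d)
    have hFint : ∀ k, IntegrableOn (Fk k) I2 volume :=
      fun k => contIntegrableOn (hcont _ _) _ _
    have hGint : ∀ k, IntegrableOn (Gk k) I2 volume :=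
      fun k => contIntegrableOn (hcont _ _) _ _
    have hbnd : ∀ (c : ℂ) (d : ℤ),
        (∫ t in I2, ‖Complex.exp (-(Complex.I*t*j)) * (c * phi d t)‖)
          ≤ (2*π) * (‖c‖ * Cb d) := by
      intro c d
      have hle : ∀ t ∈ I2, ‖Complex.exp (-(Complex.I*t*j)) * (c * phi d t)‖
          ≤ ‖c‖ * Cb d := by
        intro t ht
        rw [norm_mul, norm_mul]
        have he : ‖Complex.exp (-(Complex.I*t*j))‖ = 1 := by
          rw [show (-(Complex.I*(t:ℂ)*(j:ℂ))) = Complex.I*t*(-(j:ℂ)) from by ring]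
          exact norm_exp_I_mul t _ (by simp)
        rw [he, one_mul]
        exact mul_le_mul_of_nonneg_left (phi_bound d t ht.1 ht.2.le) (norm_nonneg c)
      calc (∫ t in I2, ‖Complex.exp (-(Complex.I*t*j)) * (c * phi d t)‖)
          ≤ ∫ t in I2, ‖c‖ * Cb d := by
            apply setIntegral_mono_on ((contIntegrableOn (hcont c d) _ _).norm)
              (integrableOn_const (by
                rw [Real.volume_Ico]; exact ENNReal.ofReal_ne_top))
              measurableSet_Ico hle
        _ = (2*π) * (‖c‖ * Cb d) := by
            rw [setIntegral_const, smul_eq_mul, hI2, measureReal_def, Real.volume_Ico,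
              ENNReal.toReal_ofReal (by linarith)]
            ring
    have hsummF : Summable (fun k => ∫ t in I2, ‖Fk k t‖) := by
      have ha : Summable (fun k : ℕ => ‖⟪ket m, P (ket k)⟫_ℂ‖^2) := by
        have heqn : (fun k : ℕ => ‖⟪ket m, P (ket k)⟫_ℂ‖^2)
            = fun k => ‖(P (ket m)) k‖^2 := by
          funext k
          rw [← inner_ket_left k (P (ket m)), ← sa_inner_swap hsa, ← inner_conj_symm,
            RCLike.norm_conj]
        rw [heqn]
        exact sq_summ _
      refine Summable.of_nonneg_of_le
        (fun k => integral_nonneg (fun t => norm_nonneg _)) (fun k => hbnd _ _)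
        ((prod_summable ha (fun k => (k:ℤ) - (n:ℤ)) ?_).mul_left (2*π))
      intro a b hab
      simpa using hab
    have hsummG : Summable (fun k => ∫ t in I2, ‖Gk k t‖) := by
      have ha : Summable (fun k : ℕ => ‖⟪ket k, P (ket n)⟫_ℂ‖^2) := by
        have heqn : (fun k : ℕ => ‖⟪ket k, P (ket n)⟫_ℂ‖^2)
            = fun k => ‖(P (ket n)) k‖^2 := by
          funext k
          rw [inner_ket_left k (P (ket n))]
        rw [heqn]
        exact sq_summ _
      refine Summable.of_nonneg_of_le
        (fun k => integral_nonneg (fun t => norm_nonneg _)) (fun k => hbnd _ _)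
        ((prod_summable ha (fun k => (m:ℤ) - (k:ℤ)) ?_).mul_left (2*π))
      intro a b hab
      simp only at hab
      omega
    have hswapF : (∑' k, ∫ t in I2, Fk k t) = ∫ t in I2, ∑' k, Fk k t :=
      integral_tsum_of_summable_integral_norm hFint hsummF
    have hswapG : (∑' k, ∫ t in I2, Gk k t) = ∫ t in I2, ∑' k, Gk k t :=
      integral_tsum_of_summable_integral_norm hGint hsummG
    have hmid : (∫ t in I2, ∑' k, Fk k t) = ∫ t in I2, ∑' k, Gk k t :=
      setIntegral_congr_fun measurableSet_Ico heqt
    have hFval : ∀ k : ℕ, (∫ t in I2, Fk k t)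
        = ⟪ket m, P (ket k)⟫_ℂ *
          (if (k:ℤ)-(n:ℤ) = 0 then Ψ₀
            else if (k:ℤ)-(n:ℤ) = (j:ℤ) then (Complex.I*(j:ℂ))⁻¹ else 0) := by
      intro k
      have hrw : ∀ t : ℝ, Fk k t = ⟪ket m, P (ket k)⟫_ℂ *
          (Complex.exp (-(Complex.I*t*j)) * phi ((k:ℤ)-(n:ℤ)) t) := by
        intro t; rw [hFk]; ring
      simp_rw [hrw]
      rw [MeasureTheory.integral_const_mul]
      congr 1
      by_cases hd : (k:ℤ)-(n:ℤ) = 0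
      · rw [if_pos hd, hd, hΨ₀]
      · rw [if_neg hd, hI2, psi_int j hj _ hd]
    have hGval : ∀ k : ℕ, (∫ t in I2, Gk k t)
        = ⟪ket k, P (ket n)⟫_ℂ *
          (if (m:ℤ)-(k:ℤ) = 0 then Ψ₀
            else if (m:ℤ)-(k:ℤ) = (j:ℤ) then (Complex.I*(j:ℂ))⁻¹ else 0) := by
      intro k
      have hrw : ∀ t : ℝ, Gk k t = ⟪ket k, P (ket n)⟫_ℂ *
          (Complex.exp (-(Complex.I*t*j)) * phi ((m:ℤ)-(k:ℤ)) t) := by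
        intro t; rw [hGk]; ring
      simp_rw [hrw]
      rw [MeasureTheory.integral_const_mul]
      congr 1
      by_cases hd : (m:ℤ)-(k:ℤ) = 0
      · rw [if_pos hd, hd, hΨ₀]
      · rw [if_neg hd, hI2, psi_int j hj _ hd]
    have hLsum : (∑' k, ∫ t in I2, Fk k t)
        = ⟪ket m, P (ket n)⟫_ℂ * Ψ₀
          + ⟪ket m, P (ket (n+j))⟫_ℂ * (Complex.I*(j:ℂ))⁻¹ := by
      rw [tsum_eq_sum (s := {n, n+j}) ?_]
      · rw [Finset.sum_pair (by omega : n ≠ n + j), hFval n, hFval (n+j)]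
        rw [if_pos (by omega : (n:ℤ)-(n:ℤ) = 0),
          if_neg (by push_cast; omega : ¬ (((n+j:ℕ):ℤ)-(n:ℤ) = 0)),
          if_pos (by push_cast; ring : ((n+j:ℕ):ℤ)-(n:ℤ) = (j:ℤ))]
      · intro k hk
        simp only [Finset.mem_insert, Finset.mem_singleton, not_or] at hk
        rw [hFval k, if_neg (by omega : ¬ ((k:ℤ)-(n:ℤ) = 0)),
          if_neg (by omega : ¬ ((k:ℤ)-(n:ℤ) = (j:ℤ))), mul_zero]
    have hRsum : (∑' k, ∫ t in I2, Gk k t)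
        = ⟪ket m, P (ket n)⟫_ℂ * Ψ₀
          + (if j ≤ m then ⟪ket (m-j), P (ket n)⟫_ℂ else 0) * (Complex.I*(j:ℂ))⁻¹ := by
      by_cases hjm : j ≤ m
      · rw [tsum_eq_sum (s := {m, m-j}) ?_]
        · rw [Finset.sum_pair (by omega : m ≠ m - j), hGval m, hGval (m-j)]
          rw [if_pos (by omega : (m:ℤ)-(m:ℤ) = 0),
            if_neg (by push_cast [hjm]; omega : ¬ ((m:ℤ)-((m-j:ℕ):ℤ) = 0)),
            if_pos (by push_cast [hjm]; omega : (m:ℤ)-((m-j:ℕ):ℤ) = (j:ℤ)),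
            if_pos hjm]
        · intro k hk
          simp only [Finset.mem_insert, Finset.mem_singleton, not_or] at hk
          rw [hGval k, if_neg (by omega : ¬ ((m:ℤ)-(k:ℤ) = 0)),
            if_neg (by
              push_cast
              intro hcon
              have : k = m - j := by omega
              exact hk.2 this), mul_zero]
      · rw [tsum_eq_sum (s := {m}) ?_]
        · rw [Finset.sum_singleton, hGval m,
            if_pos (by omega : (m:ℤ)-(m:ℤ) = 0), if_neg hjm, zero_mul, add_zero]
        · intro k hk
          simp only [Finset.mem_singleton] at hk
          rw [hGval k, if_neg (by omega : ¬ ((m:ℤ)-(k:ℤ) = 0)),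
            if_neg (by omega : ¬ ((m:ℤ)-(k:ℤ) = (j:ℤ))), mul_zero]
    have hfin := hLsum.symm.trans ((hswapF.trans (hmid.trans hswapG.symm)).trans hRsum)
    have hIj : (Complex.I*(j:ℂ))⁻¹ ≠ 0 := by
      apply inv_ne_zero
      apply mul_ne_zero Complex.I_ne_zero
      exact_mod_cast (by omega : j ≠ 0)
    exact mul_right_cancel₀ hIj (add_left_cancel hfin)
  -- Step 3: P is diagonal with constant diagonal
  have hp0 : ∀ k l : ℕ, k < l → ⟪ket k, P (ket l)⟫_ℂ = 0 := by
    intro k l hkl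
    have h := hkey k 0 l (by omega)
    rw [zero_add] at h
    rw [h, if_neg (by omega)]
  have hdiag : ∀ l : ℕ, ⟪ket l, P (ket l)⟫_ℂ = ⟪ket 0, P (ket 0)⟫_ℂ := by
    intro l
    rcases Nat.eq_zero_or_pos l with h0 | hpos
    · rw [h0]
    · have h := hkey l 0 l (by omega)
      rw [zero_add] at h
      rw [h, if_pos le_rfl, Nat.sub_self]
  have hlow : ∀ k l : ℕ, l < k → ⟪ket k, P (ket l)⟫_ℂ = 0 := by
    intro k l hlk
    have h1 : ⟪ket l, P (ket k)⟫_ℂ = 0 := hp0 l k hlk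
    calc ⟪ket k, P (ket l)⟫_ℂ = conj ⟪P (ket l), ket k⟫_ℂ := (inner_conj_symm _ _).symm
      _ = conj ⟪ket l, P (ket k)⟫_ℂ := by rw [sa_inner_swap hsa]
      _ = 0 := by rw [h1, map_zero]
  have hket : ∀ l : ℕ, P (ket l) = ⟪ket 0, P (ket 0)⟫_ℂ • ket l := by
    intro l
    apply lp.ext
    funext k
    rw [lp.coeFn_smul]
    simp only [Pi.smul_apply, smul_eq_mul]
    rw [← inner_ket_left k (P (ket l))]
    rcases lt_trichotomy k l with h | h | h
    · rw [hp0 k l h,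
        show (ket l : ∀ _, ℂ) k = 0 from lp.single_apply_ne 2 l 1 (by omega), mul_zero]
    · subst h
      rw [hdiag k, show (ket k : ∀ _, ℂ) k = 1 from lp.single_apply_self 2 k 1, mul_one]
    · rw [hlow k l h,
        show (ket l : ∀ _, ℂ) k = 0 from lp.single_apply_ne 2 l 1 (by omega), mul_zero]
  -- Step 4: conclude
  apply ContinuousLinearMap.ext
  intro u
  have h1 : HasSum (fun l : ℕ => lp.single 2 l (u l)) u := lp.hasSum_single (by norm_num) u
  have h2 := h1.mapL P
  have h3 : (fun l => P (lp.single 2 l (u l)))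
      = fun l => ⟪ket 0, P (ket 0)⟫_ℂ • lp.single 2 l (u l) := by
    funext l
    rw [single_eq_smul_ket, ContinuousLinearMap.map_smul, hket l, smul_comm,
      ← single_eq_smul_ket]
  rw [h3] at h2
  have h4 := h1.const_smul (⟪ket 0, P (ket 0)⟫_ℂ)
  have h5 := h2.unique h4
  simpa using h5

lemma sa_inner_im {T : H →L[ℂ] H} (hT : IsSelfAdjoint T) (ψ : H) :
    (⟪ψ, T ψ⟫_ℂ).im = 0 := by
  apply Complex.conj_eq_iff_im.mp
  rw [inner_conj_symm, sa_inner_swap hT]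

theorem stmt3' {Ω : Type*} [MeasurableSpace Ω]
    (Ecan : Set ℝ → H →L[ℂ] H)
    (F : Set Ω → H →L[ℂ] H)
    (hFproj : ∀ X : Set Ω, MeasurableSet X →
      IsIdempotentElem (F X) ∧ IsSelfAdjoint (F X))
    (M : Set (Ω × ℝ) → H →L[ℂ] H)
    (hMpos : ∀ S : Set (Ω × ℝ), MeasurableSet S → S ⊆ Set.univ ×ˢ Set.Ico 0 (2*π) →
      (M S).IsPositive)
    (hMnorm : M (Set.univ ×ˢ Set.Ico 0 (2*π)) = (1 : H →L[ℂ] H))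
    (hMadd : ∀ (ψ : H) (S : ℕ → Set (Ω × ℝ)),
      (∀ i, MeasurableSet (S i) ∧ S i ⊆ Set.univ ×ˢ Set.Ico 0 (2*π)) →
      Pairwise (Function.onFun Disjoint S) →
      HasSum (fun i => ⟪ψ, M (S i) ψ⟫_ℂ) ⟪ψ, M (⋃ i, S i) ψ⟫_ℂ)
    (hMF : ∀ X : Set Ω, MeasurableSet X → M (X ×ˢ Set.Ico 0 (2*π)) = F X)
    (hME : ∀ Θ : Set ℝ, MeasurableSet Θ → Θ ⊆ Set.Ico 0 (2*π) →
      M (Set.univ ×ˢ Θ) = Ecan Θ)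
    (X : Set Ω) (hX : MeasurableSet X) :
    ∀ Θ : Set ℝ, MeasurableSet Θ → Θ ⊆ Set.Ico 0 (2*π) → ∀ m n : ℕ,
      ⟪(F X) (ket m), Ecan Θ (ket n)⟫_ℂ = ⟪ket m, Ecan Θ ((F X) (ket n))⟫_ℂ := by
  set Iv : Set ℝ := Set.Ico (0:ℝ) (2*π) with hIv
  set P : H →L[ℂ] H := F X with hPdef
  obtain ⟨hPid, hPsa⟩ := hFproj X hX
  have hM0 : ∀ ψ : H, ⟪ψ, M ∅ ψ⟫_ℂ = 0 := by
    intro ψ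
    have h := hMadd ψ (fun _ => ∅) (fun i => ⟨MeasurableSet.empty, by simp⟩)
      (by intro i j hij; simp [Function.onFun])
    rw [Set.iUnion_empty] at h
    exact (tendsto_nhds_unique tendsto_const_nhds h.summable.tendsto_atTop_zero)
  have hM2 : ∀ (S₁ S₂ : Set (Ω × ℝ)), MeasurableSet S₁ → MeasurableSet S₂ →
      S₁ ⊆ Set.univ ×ˢ Iv → S₂ ⊆ Set.univ ×ˢ Iv → Disjoint S₁ S₂ →
      M (S₁ ∪ S₂) = M S₁ + M S₂ := by
    intro S₁ S₂ h1 h2 hs1 hs2 hdisj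
    apply quad_ext
    intro ψ
    set S : ℕ → Set (Ω × ℝ) := fun i => if i = 0 then S₁ else if i = 1 then S₂ else ∅
      with hS
    have hprop : ∀ i, MeasurableSet (S i) ∧ S i ⊆ Set.univ ×ˢ Iv := by
      intro i
      rw [hS]
      by_cases hi0 : i = 0
      · simpa [hi0] using ⟨h1, hs1⟩
      by_cases hi1 : i = 1
      · simpa [hi0, hi1] using ⟨h2, hs2⟩
      · simp [hi0, hi1]
    have hS0 : S 0 = S₁ := by simp [hS]
    have hS1 : S 1 = S₂ := by simp [hS]
    have hSe : ∀ i, i ≠ 0 → i ≠ 1 → S i = ∅ := by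
      intro i h0 h1
      simp [hS, h0, h1]
    have hpair : Pairwise (Function.onFun Disjoint S) := by
      intro a b hab
      rw [Function.onFun]
      by_cases ha0 : a = 0
      · by_cases hb1 : b = 1
        · rw [ha0, hb1, hS0, hS1]; exact hdisj
        · have hb0 : b ≠ 0 := fun h => hab (ha0.trans h.symm)
          rw [hSe b hb0 hb1]
          exact Set.disjoint_empty _
      · by_cases ha1 : a = 1
        · by_cases hb0 : b = 0
          · rw [ha1, hb0, hS0, hS1]; exact hdisj.symm
          · have hb1 : b ≠ 1 := fun h => hab (ha1.trans h.symm)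
            rw [hSe b hb0 hb1]
            exact Set.disjoint_empty _
        · rw [hSe a ha0 ha1]
          exact Set.empty_disjoint _
    have hU : (⋃ i, S i) = S₁ ∪ S₂ := by
      apply Set.Subset.antisymm
      · intro x hx
        obtain ⟨i, hi⟩ := Set.mem_iUnion.mp hx
        by_cases hi0 : i = 0
        · rw [hi0, hS0] at hi; exact Or.inl hi
        by_cases hi1 : i = 1
        · rw [hi1, hS1] at hi; exact Or.inr hi
        · rw [hSe i hi0 hi1] at hi; exact absurd hi (Set.notMem_empty x)
      · intro x hx
        rcases hx with h | h
        · exact Set.mem_iUnion.mpr ⟨0, by rw [hS0]; exact h⟩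
        · exact Set.mem_iUnion.mpr ⟨1, by rw [hS1]; exact h⟩
    have h := hMadd ψ S hprop hpair
    rw [hU] at h
    have hval : HasSum (fun i => ⟪ψ, M (S i) ψ⟫_ℂ)
        (⟪ψ, M S₁ ψ⟫_ℂ + ⟪ψ, M S₂ ψ⟫_ℂ) := by
      have h2' := hasSum_sum_of_ne_finset_zero (s := ({0, 1} : Finset ℕ))
        (f := fun i => ⟪ψ, M (S i) ψ⟫_ℂ) (L := SummationFilter.unconditional ℕ) ?_
      · rw [Finset.sum_pair (by omega : (0:ℕ) ≠ 1)] at h2'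
        rw [hS0, hS1] at h2'
        exact h2'
      · intro b hb
        simp only [Finset.mem_insert, Finset.mem_singleton, not_or] at hb
        show ⟪ψ, (M (S b)) ψ⟫_ℂ = 0
        rw [hSe b hb.1 hb.2, hM0 ψ]
    rw [h.unique hval]
    simp [ContinuousLinearMap.add_apply, inner_add_right]
  have hsub : ∀ (Y : Set Ω) (Θ : Set ℝ), Θ ⊆ Iv → (Y ×ˢ Θ) ⊆ Set.univ ×ˢ Iv :=
    fun Y Θ h => Set.prod_mono (Set.subset_univ Y) h
  have hP1 : M (X ×ˢ Iv) = P := hMF X hX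
  have hPc : M (Xᶜ ×ˢ Iv) = 1 - P := by
    have hu : (X ×ˢ Iv) ∪ (Xᶜ ×ˢ Iv) = Set.univ ×ˢ Iv := by
      rw [← Set.union_prod]; simp
    have hd : Disjoint (X ×ˢ Iv) (Xᶜ ×ˢ Iv) :=
      Set.Disjoint.set_prod_left disjoint_compl_right Iv Iv
    have h2 := hM2 _ _ (hX.prod measurableSet_Ico) (hX.compl.prod measurableSet_Ico)
      (hsub _ _ subset_rfl) (hsub _ _ subset_rfl) hd
    rw [hu, hMnorm, hP1] at h2
    rw [h2]
    abel
  intro Θ hΘ hΘsub m n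
  set A := M (X ×ˢ Θ) with hA
  set B := M (Xᶜ ×ˢ Θ) with hB
  set A' := M (X ×ˢ (Iv \ Θ)) with hA'
  set B' := M (Xᶜ ×ˢ (Iv \ Θ)) with hB'
  have hΘdiff : MeasurableSet (Iv \ Θ) := measurableSet_Ico.diff hΘ
  have hApos := hMpos _ (hX.prod hΘ) (hsub _ _ hΘsub)
  have hA'pos := hMpos _ (hX.prod hΘdiff) (hsub _ _ Set.diff_subset)
  have hBpos := hMpos _ (hX.compl.prod hΘ) (hsub _ _ hΘsub)
  have hB'pos := hMpos _ (hX.compl.prod hΘdiff) (hsub _ _ Set.diff_subset)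
  have hsplit : ∀ (Y : Set Ω), MeasurableSet Y →
      M (Y ×ˢ Θ) + M (Y ×ˢ (Iv \ Θ)) = M (Y ×ˢ Iv) := by
    intro Y hY
    have hu : (Y ×ˢ Θ) ∪ (Y ×ˢ (Iv \ Θ)) = Y ×ˢ Iv := by
      rw [← Set.prod_union, Set.union_diff_cancel hΘsub]
    have hd : Disjoint (Y ×ˢ Θ) (Y ×ˢ (Iv \ Θ)) :=
      Set.Disjoint.set_prod_right Set.disjoint_sdiff_right Y Y
    rw [← hM2 _ _ (hY.prod hΘ) (hY.prod hΘdiff)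
      (hsub _ _ hΘsub) (hsub _ _ Set.diff_subset) hd, hu]
  have hAA' : A + A' = P := by rw [hA, hA', hsplit X hX, hP1]
  have hBB' : B + B' = 1 - P := by rw [hB, hB', hsplit _ hX.compl, hPc]
  have hAB : A + B = Ecan Θ := by
    have hu : (X ×ˢ Θ) ∪ (Xᶜ ×ˢ Θ) = Set.univ ×ˢ Θ := by
      rw [← Set.union_prod]; simp
    rw [← hME Θ hΘ hΘsub, ← hu,
      hM2 _ _ (hX.prod hΘ) (hX.compl.prod hΘ) (hsub _ _ hΘsub) (hsub _ _ hΘsub)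
        (Set.Disjoint.set_prod_left disjoint_compl_right Θ Θ)]
  -- pairs of positive operators summing to something that kills ψ
  have hpairzero : ∀ (T S : H →L[ℂ] H), T.IsPositive → S.IsPositive →
      ∀ ψ : H, ⟪ψ, T ψ⟫_ℂ + ⟪ψ, S ψ⟫_ℂ = 0 → T ψ = 0 := by
    intro T S hT hS ψ hsum
    apply isPositive_inner_zero hT
    have h1 : 0 ≤ (⟪ψ, T ψ⟫_ℂ).re := (Complex.nonneg_iff.mp (hT.inner_nonneg_right ψ)).1
    have h2 : 0 ≤ (⟪ψ, S ψ⟫_ℂ).re := (Complex.nonneg_iff.mp (hS.inner_nonneg_right ψ)).1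
    have h3 := sa_inner_im hT.isSelfAdjoint ψ
    have h4 : (⟪ψ, T ψ⟫_ℂ).re + (⟪ψ, S ψ⟫_ℂ).re = 0 := by
      have := congrArg Complex.re hsum
      simpa using this
    have hre0 : (⟪ψ, T ψ⟫_ℂ).re = 0 := by linarith
    exact Complex.ext (by rw [hre0]; simp) (by rw [h3]; simp)
  have hAkill : ∀ φ : H, A ((1 - P) φ) = 0 := by
    intro φ
    set ψ := (1 - P) φ with hψ
    have hPψ : P ψ = 0 := by
      rw [hψ]
      simp only [ContinuousLinearMap.sub_apply, ContinuousLinearMap.one_apply, map_sub]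
      rw [← ContinuousLinearMap.mul_apply, hPid, sub_self]
    have hq : ⟪ψ, A ψ⟫_ℂ + ⟪ψ, A' ψ⟫_ℂ = 0 := by
      have h := congrArg (fun T : H →L[ℂ] H => ⟪ψ, T ψ⟫_ℂ) hAA'
      simp only [ContinuousLinearMap.add_apply, inner_add_right] at h
      rw [h, hPψ, inner_zero_right]
    exact hpairzero A A' hApos hA'pos ψ hq
  have hBkill : ∀ φ : H, B (P φ) = 0 := by
    intro φ
    set ψ := P φ with hψ
    have hPψ : (1 - P) ψ = 0 := by
      rw [hψ]
      simp only [ContinuousLinearMap.sub_apply, ContinuousLinearMap.one_apply]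
      rw [← ContinuousLinearMap.mul_apply, hPid, sub_self]
    have hq : ⟪ψ, B ψ⟫_ℂ + ⟪ψ, B' ψ⟫_ℂ = 0 := by
      have h := congrArg (fun T : H →L[ℂ] H => ⟪ψ, T ψ⟫_ℂ) hBB'
      simp only [ContinuousLinearMap.add_apply, inner_add_right] at h
      rw [h, hPψ, inner_zero_right]
    exact hpairzero B B' hBpos hB'pos ψ hq
  have hAP : ∀ φ : H, A (P φ) = A φ := by
    intro φ
    have h := hAkill φ
    have h3 : (1 - P) φ = φ - P φ := by
      simp [ContinuousLinearMap.sub_apply]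
    rw [h3, map_sub] at h
    have := sub_eq_zero.mp h
    exact this.symm
  have hEP : ∀ φ : H, Ecan Θ (P φ) = A φ := by
    intro φ
    have h1 : A (P φ) + B (P φ) = Ecan Θ (P φ) := by
      rw [← hAB]
      simp [ContinuousLinearMap.add_apply]
    rw [hBkill φ, add_zero, hAP φ] at h1
    exact h1.symm
  have hAsa : IsSelfAdjoint A := hApos.isSelfAdjoint
  have hBsa : IsSelfAdjoint B := hBpos.isSelfAdjoint
  have h4 : ⟪P (ket m), Ecan Θ (ket n)⟫_ℂ = ⟪ket m, A (ket n)⟫_ℂ := by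
    rw [← hAB]
    simp only [ContinuousLinearMap.add_apply, inner_add_right]
    have hB0 : ⟪P (ket m), B (ket n)⟫_ℂ = 0 := by
      rw [← sa_inner_swap hBsa, hBkill, inner_zero_left]
    have hA1 : ⟪P (ket m), A (ket n)⟫_ℂ = ⟪ket m, A (ket n)⟫_ℂ := by
      rw [← sa_inner_swap hAsa, hAP, sa_inner_swap hAsa]
    rw [hA1, hB0, add_zero]
  rw [h4, hEP (ket n)]


/-- If a projection valued measure `F` on a measurable space `Ω` is jointly measurable with
the canonical phase observable `E_can`, i.e. there is a POVM `M` on the product σ-algebra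
whose margins are `F` and `E_can`, then `F` is trivial: each `F X` is `c • I` with
`c ∈ {0,1}`. -/
theorem stmt3 {Ω : Type*} [MeasurableSpace Ω]
    (Ecan : Set ℝ → H →L[ℂ] H)
    (hEcan : ∀ Θ : Set ℝ, MeasurableSet Θ → Θ ⊆ Set.Ico 0 (2*π) →
      ∀ m n : ℕ, ⟪ket m, Ecan Θ (ket n)⟫_ℂ
        = (2*π)⁻¹ * ∫ θ in Θ, Complex.exp (Complex.I * θ * ((m : ℂ) - (n : ℂ))))
    (F : Set Ω → H →L[ℂ] H)
    -- `F` is projection valued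
    (hFproj : ∀ X : Set Ω, MeasurableSet X →
      IsIdempotentElem (F X) ∧ IsSelfAdjoint (F X))
    -- `M` is a POVM on the product σ-algebra:
    (M : Set (Ω × ℝ) → H →L[ℂ] H)
    (hMpos : ∀ S : Set (Ω × ℝ), MeasurableSet S → S ⊆ Set.univ ×ˢ Set.Ico 0 (2*π) →
      (M S).IsPositive)
    (hMnorm : M (Set.univ ×ˢ Set.Ico 0 (2*π)) = (1 : H →L[ℂ] H))
    (hMadd : ∀ (ψ : H) (S : ℕ → Set (Ω × ℝ)),
      (∀ i, MeasurableSet (S i) ∧ S i ⊆ Set.univ ×ˢ Set.Ico 0 (2*π)) →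
      Pairwise (Function.onFun Disjoint S) →
      HasSum (fun i => ⟪ψ, M (S i) ψ⟫_ℂ) ⟪ψ, M (⋃ i, S i) ψ⟫_ℂ)
    -- the margins of `M` are `F` and `E_can`:
    (hMF : ∀ X : Set Ω, MeasurableSet X → M (X ×ˢ Set.Ico 0 (2*π)) = F X)
    (hME : ∀ Θ : Set ℝ, MeasurableSet Θ → Θ ⊆ Set.Ico 0 (2*π) →
      M (Set.univ ×ˢ Θ) = Ecan Θ) :
    ∀ X : Set Ω, MeasurableSet X →
      ∃ c : ℂ, (c = 0 ∨ c = 1) ∧ F X = c • (1 : H →L[ℂ] H) := by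
  intro X hX
  obtain ⟨hPid, hPsa⟩ := hFproj X hX
  have hComm := stmt3' Ecan F hFproj M hMpos hMnorm hMadd hMF hME X hX
  have hφval : ∀ t : ℝ, 0 ≤ t → t < 2*π → ∀ k n : ℕ,
      ⟪ket k, Ecan (Set.Ico 0 t) (ket n)⟫_ℂ = phi ((k:ℤ) - (n:ℤ)) t :=
    fun t ht0 htlt k n => Ecan_Ico_val Ecan hEcan t ht0 htlt k n
  have hscal := comm_scalar (F X) hPsa Ecan hφval hComm
  refine ⟨⟪ket 0, (F X) (ket 0)⟫_ℂ, ?_, hscal⟩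
  set c := ⟪ket 0, (F X) (ket 0)⟫_ℂ with hc
  have h1 : (F X) ((F X) (ket 0)) = (F X) (ket 0) := by
    rw [← ContinuousLinearMap.mul_apply, hPid]
  rw [hscal] at h1
  simp only [ContinuousLinearMap.smul_apply, ContinuousLinearMap.one_apply] at h1
  have h2 : (c * c) • (ket 0) = c • ket 0 := by rwa [smul_smul] at h1
  have hket0 : (ket 0 : H) ≠ 0 := by
    intro h
    have h01 : (ket 0 : ∀ _, ℂ) 0 = 1 := lp.single_apply_self 2 0 1
    rw [h] at h01
    rw [lp.coeFn_zero] at h01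
    exact one_ne_zero h01.symm
  have h3 : c * c - c = 0 := by
    have h4 := sub_eq_zero.mpr h2
    rw [← sub_smul] at h4
    rcases smul_eq_zero.mp h4 with h | h
    · exact h
    · exact absurd h hket0
  rcases mul_eq_zero.mp (by linear_combination h3 : c * (c - 1) = 0) with h | h
  · exact Or.inl h
  · exact Or.inr (by linear_combination h)
end
end

section
/- For every n ∈ ℕ and x ∈ ℝ, Σ_{m=0}^{n} (-1)^m · C(n,m) · L_m(x) = x^n / n!, where L_m denotes the m-th Laguerre polynomial and C(n,m) the binomial coefficient. -/
noncomputable section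

/-- The `n`-th Laguerre polynomial, `L n x = Σ_{j=0}^{n} C(n,j) (-1)^j x^j / j!`. -/
def laguerre (n : ℕ) (x : ℝ) : ℝ :=
  ∑ j ∈ Finset.range (n + 1), (n.choose j : ℝ) * (-1) ^ j * x ^ j / (Nat.factorial j : ℝ)

lemma alt_sum_real (N : ℕ) :
    ∑ k ∈ Finset.range (N + 1), (-1 : ℝ) ^ k * (N.choose k : ℝ)
      = if N = 0 then 1 else 0 := by
  have h := @Int.alternating_sum_range_choose N
  have h2 : ((∑ i ∈ Finset.range (N + 1), (-1 : ℤ) ^ i * N.choose i : ℤ) : ℝ)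
      = ((if N = 0 then 1 else 0 : ℤ) : ℝ) := by rw [h]
  push_cast at h2
  rw [h2]

lemma key (n j : ℕ) (hj : j ≤ n) :
    ∑ m ∈ Finset.range (n + 1), (-1 : ℝ) ^ m * (n.choose m : ℝ) * (m.choose j : ℝ)
      = if j = n then (-1 : ℝ) ^ n else 0 := by
  have hsub : Finset.Ico j (n + 1) ⊆ Finset.range (n + 1) := by
    intro m hm; rw [Finset.mem_Ico] at hm; exact Finset.mem_range.mpr hm.2
  rw [← Finset.sum_subset hsub (by
    intro m _ hm
    rw [Finset.mem_Ico, Finset.mem_range] at *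
    have : m < j := by omega
    rw [Nat.choose_eq_zero_of_lt this]; ring)]
  rw [Finset.sum_Ico_eq_sum_range]
  have hN : n + 1 - j = (n - j) + 1 := by omega
  rw [hN]
  have h1 : ∀ k ∈ Finset.range ((n - j) + 1),
      (-1 : ℝ) ^ (j + k) * (n.choose (j + k) : ℝ) * ((j + k).choose j : ℝ)
        = ((n.choose j : ℝ) * (-1 : ℝ) ^ j) * ((-1 : ℝ) ^ k * ((n - j).choose k : ℝ)) := by
    intro k hk
    rw [Finset.mem_range] at hk
    have hc := Nat.choose_mul (n := n) (Nat.le_add_right j k)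
    rw [Nat.add_sub_cancel_left] at hc
    have hc' : (n.choose (j + k) : ℝ) * ((j + k).choose j : ℝ)
        = (n.choose j : ℝ) * ((n - j).choose k : ℝ) := by exact_mod_cast hc
    rw [pow_add]
    linear_combination ((-1 : ℝ) ^ j * (-1 : ℝ) ^ k) * hc' 
  rw [Finset.sum_congr rfl h1, ← Finset.mul_sum, alt_sum_real]
  rcases eq_or_lt_of_le hj with h | h
  · simp [h.symm, Nat.sub_self, ← pow_add, show n + n = 2 * n by ring, pow_mul]
  · rw [if_neg (by omega), if_neg (by omega)]; ring

/-- `Σ_{m=0}^{n} (-1)^m C(n,m) L_m(x) = x^n / n!`. -/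
theorem stmt7 (n : ℕ) (x : ℝ) :
    ∑ m ∈ Finset.range (n + 1), (-1 : ℝ) ^ m * (n.choose m : ℝ) * laguerre m x
      = x ^ n / (Nat.factorial n : ℝ) := by
  have hlag : ∀ m ∈ Finset.range (n + 1), laguerre m x
      = ∑ j ∈ Finset.range (n + 1),
          (m.choose j : ℝ) * (-1) ^ j * x ^ j / (Nat.factorial j : ℝ) := by
    intro m hm
    rw [Finset.mem_range] at hm
    unfold laguerre
    apply Finset.sum_subset
    · intro j hj; rw [Finset.mem_range] at *; omega
    · intro j _ hj
      rw [Finset.mem_range] at hj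
      rw [Nat.choose_eq_zero_of_lt (by omega)]; ring
  calc ∑ m ∈ Finset.range (n + 1), (-1 : ℝ) ^ m * (n.choose m : ℝ) * laguerre m x
      = ∑ m ∈ Finset.range (n + 1), ∑ j ∈ Finset.range (n + 1),
          ((-1) ^ j * x ^ j / (Nat.factorial j : ℝ)) *
            ((-1 : ℝ) ^ m * (n.choose m : ℝ) * (m.choose j : ℝ)) := by
        refine Finset.sum_congr rfl fun m hm => ?_
        rw [hlag m hm, Finset.mul_sum]
        refine Finset.sum_congr rfl fun j _ => ?_; ring
    _ = ∑ j ∈ Finset.range (n + 1),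
          ((-1) ^ j * x ^ j / (Nat.factorial j : ℝ)) *
            ∑ m ∈ Finset.range (n + 1),
              ((-1 : ℝ) ^ m * (n.choose m : ℝ) * (m.choose j : ℝ)) := by
        rw [Finset.sum_comm]
        refine Finset.sum_congr rfl fun j _ => ?_
        rw [Finset.mul_sum]
    _ = x ^ n / (Nat.factorial n : ℝ) := by
        rw [Finset.sum_congr rfl (fun j hj => by
          rw [key n j (Nat.lt_succ_iff.mp (Finset.mem_range.mp hj))])]
        simp only [mul_ite, mul_zero]
        rw [Finset.sum_ite_eq' (Finset.range (n + 1)) n]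
        simp only [Finset.mem_range, Nat.lt_succ_self, if_pos]
        rw [show ((-1 : ℝ)) ^ n * x ^ n / (Nat.factorial n : ℝ) * (-1 : ℝ) ^ n
          = ((-1 : ℝ) ^ n * (-1 : ℝ) ^ n) * (x ^ n / (Nat.factorial n : ℝ)) by ring,
          ← pow_add, show n + n = 2 * n by ring, pow_mul]
        norm_num
end
end
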